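/- Let R be a commutative strongly ℤ-graded ring with grading 𝒜. Then R is a flat module over the subring R_{≥0}, and also a flat module over the subring R_{≤0}. -/

import Mathlib

/-- A ℤ-graded ring is *strongly graded* if `𝒜 i * 𝒜 j = 𝒜 (i + j)` for all `i j`. -/
def IsStronglyGraded {R : Type*} [Ring R] (𝒜 : ℤ → Submodule ℤ R) : Prop :=
  ∀ i j : ℤ, 𝒜 i * 𝒜 j = 𝒜 (i + j)

variable {R : Type*} [CommRing R] (𝒜 : ℤ → Submodule ℤ R) [GradedRing 𝒜]

/-- `R_{≤k}`, the sum of the homogeneous components of degree at most `k`. -/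
def Rle (k : ℤ) : Submodule ℤ R := ⨆ n ≤ k, 𝒜 n

/-- `R_{≥k}`, the sum of the homogeneous components of degree at least `k`. -/
def Rge (k : ℤ) : Submodule ℤ R := ⨆ n ≥ k, 𝒜 n

theorem Rle_mul_Rle (a b : ℤ) : Rle 𝒜 a * Rle 𝒜 b ≤ Rle 𝒜 (a + b) := by
  rw [Rle, Rle, Submodule.iSup_mul]
  refine iSup_le fun n => ?_
  rw [Submodule.iSup_mul]
  refine iSup_le fun hn => ?_
  rw [Submodule.mul_iSup]
  refine iSup_le fun m => ?_
  rw [Submodule.mul_iSup]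
  refine iSup_le fun hm => ?_
  refine le_trans (Submodule.mul_le.2 fun x hx y hy => SetLike.mul_mem_graded hx hy) ?_
  exact le_iSup₂_of_le (n + m) (add_le_add hn hm) le_rfl

theorem Rge_mul_Rge (a b : ℤ) : Rge 𝒜 a * Rge 𝒜 b ≤ Rge 𝒜 (a + b) := by
  rw [Rge, Rge, Submodule.iSup_mul]
  refine iSup_le fun n => ?_
  rw [Submodule.iSup_mul]
  refine iSup_le fun hn => ?_
  rw [Submodule.mul_iSup]
  refine iSup_le fun m => ?_
  rw [Submodule.mul_iSup]
  refine iSup_le fun hm => ?_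
  refine le_trans (Submodule.mul_le.2 fun x hx y hy => SetLike.mul_mem_graded hx hy) ?_
  exact le_iSup₂_of_le (n + m) (add_le_add hn hm) le_rfl

/-- The subring `R_{≤0}` of `R`. -/
def RleSubring : Subring R where
  carrier := Rle 𝒜 0
  zero_mem' := zero_mem _
  add_mem' := fun h1 h2 => add_mem h1 h2
  neg_mem' := fun h => neg_mem h
  one_mem' :=
    Submodule.mem_iSup_of_mem 0 (Submodule.mem_iSup_of_mem le_rfl (SetLike.one_mem_graded 𝒜))
  mul_mem' := fun h1 h2 => by
    simpa using Rle_mul_Rle 𝒜 0 0 (Submodule.mul_mem_mul h1 h2)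

/-- The subring `R_{≥0}` of `R`. -/
def RgeSubring : Subring R where
  carrier := Rge 𝒜 0
  zero_mem' := zero_mem _
  add_mem' := fun h1 h2 => add_mem h1 h2
  neg_mem' := fun h => neg_mem h
  one_mem' :=
    Submodule.mem_iSup_of_mem 0 (Submodule.mem_iSup_of_mem le_rfl (SetLike.one_mem_graded 𝒜))
  mul_mem' := fun h1 h2 => by
    simpa using Rge_mul_Rge 𝒜 0 0 (Submodule.mul_mem_mul h1 h2)

/- ===== auxiliary lemmas ===== -/

universe u

/-- A module all of whose finite subsets lie in a flat submodule is flat. -/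
theorem aux_flat_of_finset_sub {S : Type u} [CommRing S] {M : Type u} [AddCommGroup M]
    [Module S M]
    (H : ∀ s : Finset M, ∃ N : Submodule S M, (↑s : Set M) ⊆ ↑N ∧ Module.Flat S N) :
    Module.Flat S M := by
  classical
  rw [Module.Flat.iff_forall_isTrivialRelation]
  intro ι f x hfx
  obtain ⟨N, hsub, hN⟩ := H (Finset.image x Finset.univ)
  have hmem : ∀ i, x i ∈ N := fun i => hsub (by simp)
  set x' : Fin ι → N := fun i => ⟨x i, hmem i⟩ with hx'def
  have hx' : ∑ i, f i • x' i = 0 := by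
    apply Subtype.ext
    simpa [hx'def] using hfx
  obtain ⟨κ, a, y, h1, h2⟩ := Module.Flat.iff_forall_isTrivialRelation.mp hN hx'
  refine ⟨κ, a, fun j => ↑(y j), fun i => ?_, h2⟩
  have := congrArg (Subtype.val) (h1 i)
  simpa [hx'def] using this

theorem aux_exists_fin_sum_of_mem_mul {p q : Submodule ℤ R} {r : R}
    (hr : r ∈ p * q) : ∃ (n : ℕ) (u v : Fin n → R), (∀ i, u i ∈ p) ∧ (∀ i, v i ∈ q) ∧
      ∑ i, u i * v i = r := by
  refine Submodule.mul_induction_on hr ?_ ?_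
  · intro m hm n hn
    exact ⟨1, fun _ => m, fun _ => n, fun _ => hm, fun _ => hn, by simp⟩
  · rintro x y ⟨n₁, u₁, v₁, hu₁, hv₁, h₁⟩ ⟨n₂, u₂, v₂, hu₂, hv₂, h₂⟩
    refine ⟨n₁ + n₂, Fin.append u₁ u₂, Fin.append v₁ v₂, ?_, ?_, ?_⟩
    · exact fun i => Fin.addCases (fun i => by simpa using hu₁ i)
        (fun i => by simpa using hu₂ i) i
    · exact fun i => Fin.addCases (fun i => by simpa using hv₁ i)
        (fun i => by simpa using hv₂ i) i
    · rw [Fin.sum_univ_add]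
      simp [h₁, h₂]

theorem aux_le_Rge {k n : ℤ} (hk : k ≤ n) : 𝒜 n ≤ Rge 𝒜 k :=
  le_iSup₂_of_le n hk le_rfl

theorem aux_le_Rle {k n : ℤ} (hk : n ≤ k) : 𝒜 n ≤ Rle 𝒜 k :=
  le_iSup₂_of_le n hk le_rfl

theorem aux_Rge_anti {k k' : ℤ} (hk : k ≤ k') : Rge 𝒜 k' ≤ Rge 𝒜 k :=
  iSup_le fun n => iSup_le fun hn => aux_le_Rge 𝒜 (le_trans hk hn)

theorem aux_Rle_mono {k k' : ℤ} (hk : k ≤ k') : Rle 𝒜 k ≤ Rle 𝒜 k' :=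
  iSup_le fun n => iSup_le fun hn => aux_le_Rle 𝒜 (le_trans hn hk)

/-- `R_{≥k}` as a module over the subring `R_{≥0}`. -/
def geSub (k : ℤ) : Submodule (RgeSubring 𝒜) R where
  carrier := Rge 𝒜 k
  add_mem' := fun h1 h2 => add_mem h1 h2
  zero_mem' := zero_mem _
  smul_mem' := fun s x hx => by
    have hs : (s : R) ∈ Rge 𝒜 0 := s.2
    have h2 := Rge_mul_Rge 𝒜 0 k (Submodule.mul_mem_mul hs hx)
    rw [zero_add] at h2
    simpa [Subring.smul_def, smul_eq_mul] using h2

/-- `R_{≤k}` as a module over the subring `R_{≤0}`. -/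
def leSub (k : ℤ) : Submodule (RleSubring 𝒜) R where
  carrier := Rle 𝒜 k
  add_mem' := fun h1 h2 => add_mem h1 h2
  zero_mem' := zero_mem _
  smul_mem' := fun s x hx => by
    have hs : (s : R) ∈ Rle 𝒜 0 := s.2
    have h2 := Rle_mul_Rle 𝒜 0 k (Submodule.mul_mem_mul hs hx)
    rw [zero_add] at h2
    simpa [Subring.smul_def, smul_eq_mul] using h2

theorem mem_geSub {k : ℤ} {x : R} : x ∈ geSub 𝒜 k ↔ x ∈ Rge 𝒜 k := Iff.rfl

theorem mem_leSub {k : ℤ} {x : R} : x ∈ leSub 𝒜 k ↔ x ∈ Rle 𝒜 k := Iff.rfl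

theorem flat_geSub (h : IsStronglyGraded 𝒜) (k : ℤ) (hk : k ≤ 0) :
    Module.Flat (RgeSubring 𝒜) (geSub 𝒜 k) := by
  have h1 : (1 : R) ∈ 𝒜 (-k) * 𝒜 k := by
    rw [h (-k) k, neg_add_cancel]
    exact SetLike.one_mem_graded 𝒜
  obtain ⟨n, u, v, hu, hv, huv⟩ := aux_exists_fin_sum_of_mem_mul h1
  have huS : ∀ j, u j ∈ RgeSubring 𝒜 := fun j => aux_le_Rge 𝒜 (by omega) (hu j)
  have hmul : ∀ (j : Fin n) (m : geSub 𝒜 k), u j * (m : R) ∈ RgeSubring 𝒜 := by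
    intro j m
    have h2 := Rge_mul_Rge 𝒜 (-k) k
      (Submodule.mul_mem_mul (aux_le_Rge 𝒜 le_rfl (hu j)) m.2)
    rw [neg_add_cancel] at h2
    exact h2
  let i : geSub 𝒜 k →ₗ[RgeSubring 𝒜] (Fin n → RgeSubring 𝒜) :=
    { toFun := fun m j => ⟨u j * (m : R), hmul j m⟩
      map_add' := fun m m' => funext fun j => Subtype.ext (by
        show u j * ((m : R) + (m' : R)) = u j * (m : R) + u j * (m' : R)
        ring)
      map_smul' := fun s m => funext fun j => Subtype.ext (by
        show u j * ((s : R) * (m : R)) = (s : R) * (u j * (m : R))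
        ring) }
  let r : (Fin n → RgeSubring 𝒜) →ₗ[RgeSubring 𝒜] geSub 𝒜 k :=
    { toFun := fun c => ⟨∑ j, (c j : R) * v j, sum_mem fun j _ => by
        have h2 := Rge_mul_Rge 𝒜 0 k
          (Submodule.mul_mem_mul ((c j).2 : ((c j : R) ∈ Rge 𝒜 0)) (aux_le_Rge 𝒜 le_rfl (hv j)))
        rw [zero_add] at h2
        exact h2⟩
      map_add' := fun c c' => Subtype.ext (by
        show ∑ j, ((c j : R) + (c' j : R)) * v j = (∑ j, (c j : R) * v j) + ∑ j, (c' j : R) * v j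
        rw [← Finset.sum_add_distrib]
        exact Finset.sum_congr rfl fun j _ => by ring)
      map_smul' := fun s c => Subtype.ext (by
        show ∑ j, ((s : R) * (c j : R)) * v j = (s : R) * ∑ j, (c j : R) * v j
        rw [Finset.mul_sum]
        exact Finset.sum_congr rfl fun j _ => by ring) }
  refine Module.Flat.of_retract (R := RgeSubring 𝒜) (M := Fin n → RgeSubring 𝒜) (N := geSub 𝒜 k) (i := i) (r := r) ?_
  ext m
  show ∑ j, (u j * (m : R)) * v j = (m : R)
  calc ∑ j, (u j * (m : R)) * v j = (∑ j, u j * v j) * (m : R) := by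
        rw [Finset.sum_mul]; exact Finset.sum_congr rfl fun j _ => by ring
    _ = (m : R) := by rw [huv, one_mul]

theorem flat_leSub (h : IsStronglyGraded 𝒜) (k : ℤ) (hk : 0 ≤ k) :
    Module.Flat (RleSubring 𝒜) (leSub 𝒜 k) := by
  have h1 : (1 : R) ∈ 𝒜 (-k) * 𝒜 k := by
    rw [h (-k) k, neg_add_cancel]
    exact SetLike.one_mem_graded 𝒜
  obtain ⟨n, u, v, hu, hv, huv⟩ := aux_exists_fin_sum_of_mem_mul h1
  have hmul : ∀ (j : Fin n) (m : leSub 𝒜 k), u j * (m : R) ∈ RleSubring 𝒜 := by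
    intro j m
    have h2 := Rle_mul_Rle 𝒜 (-k) k
      (Submodule.mul_mem_mul (aux_le_Rle 𝒜 le_rfl (hu j)) m.2)
    rw [neg_add_cancel] at h2
    exact h2
  let i : leSub 𝒜 k →ₗ[RleSubring 𝒜] (Fin n → RleSubring 𝒜) :=
    { toFun := fun m j => ⟨u j * (m : R), hmul j m⟩
      map_add' := fun m m' => funext fun j => Subtype.ext (by
        show u j * ((m : R) + (m' : R)) = u j * (m : R) + u j * (m' : R)
        ring)
      map_smul' := fun s m => funext fun j => Subtype.ext (by
        show u j * ((s : R) * (m : R)) = (s : R) * (u j * (m : R))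
        ring) }
  let r : (Fin n → RleSubring 𝒜) →ₗ[RleSubring 𝒜] leSub 𝒜 k :=
    { toFun := fun c => ⟨∑ j, (c j : R) * v j, sum_mem fun j _ => by
        have h2 := Rle_mul_Rle 𝒜 0 k
          (Submodule.mul_mem_mul ((c j).2 : ((c j : R) ∈ Rle 𝒜 0)) (aux_le_Rle 𝒜 le_rfl (hv j)))
        rw [zero_add] at h2
        exact h2⟩
      map_add' := fun c c' => Subtype.ext (by
        show ∑ j, ((c j : R) + (c' j : R)) * v j = (∑ j, (c j : R) * v j) + ∑ j, (c' j : R) * v j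
        rw [← Finset.sum_add_distrib]
        exact Finset.sum_congr rfl fun j _ => by ring)
      map_smul' := fun s c => Subtype.ext (by
        show ∑ j, ((s : R) * (c j : R)) * v j = (s : R) * ∑ j, (c j : R) * v j
        rw [Finset.mul_sum]
        exact Finset.sum_congr rfl fun j _ => by ring) }
  refine Module.Flat.of_retract (R := RleSubring 𝒜) (M := Fin n → RleSubring 𝒜) (N := leSub 𝒜 k) (i := i) (r := r) ?_
  ext m
  show ∑ j, (u j * (m : R)) * v j = (m : R)
  calc ∑ j, (u j * (m : R)) * v j = (∑ j, u j * v j) * (m : R) := by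
        rw [Finset.sum_mul]; exact Finset.sum_congr rfl fun j _ => by ring
    _ = (m : R) := by rw [huv, one_mul]

/-- If the commutative ring `R` is strongly ℤ-graded then `R` is flat as a
module over the subring `R_{≥0}`, and also as a module over the subring `R_{≤0}`. -/
theorem flat_over_Rge_and_Rle (h : IsStronglyGraded 𝒜) :
    Module.Flat (RgeSubring 𝒜) R ∧ Module.Flat (RleSubring 𝒜) R := by
  classical
  constructor
  · apply aux_flat_of_finset_sub
    intro s
    set N : ℕ := s.sup fun x => ((DirectSum.decompose 𝒜 x).support.sup fun i => (-i).toNat)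
      with hN
    refine ⟨geSub 𝒜 (-(N : ℤ)), ?_, flat_geSub 𝒜 h _ (by omega)⟩
    intro x hx
    have hx' := DirectSum.sum_support_decompose 𝒜 x
    rw [SetLike.mem_coe, mem_geSub, ← hx']
    refine sum_mem fun i hi => ?_
    refine aux_le_Rge 𝒜 ?_ (SetLike.coe_mem _)
    have h1 : (-i).toNat ≤ N := le_trans (Finset.le_sup (f := fun i : ℤ => (-i).toNat) hi)
      (Finset.le_sup (f := fun x => ((DirectSum.decompose 𝒜 x).support.sup fun i => (-i).toNat))
        (Finset.mem_coe.mp hx))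
    omega
  · apply aux_flat_of_finset_sub
    intro s
    set N : ℕ := s.sup fun x => ((DirectSum.decompose 𝒜 x).support.sup fun i => i.toNat)
      with hN
    refine ⟨leSub 𝒜 (N : ℤ), ?_, flat_leSub 𝒜 h _ (by omega)⟩
    intro x hx
    have hx' := DirectSum.sum_support_decompose 𝒜 x
    rw [SetLike.mem_coe, mem_leSub, ← hx']
    refine sum_mem fun i hi => ?_
    refine aux_le_Rle 𝒜 ?_ (SetLike.coe_mem _)
    have h1 : i.toNat ≤ N := le_trans (Finset.le_sup (f := fun i : ℤ => i.toNat) hi)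
      (Finset.le_sup (f := fun x => ((DirectSum.decompose 𝒜 x).support.sup fun i => i.toNat))
        (Finset.mem_coe.mp hx))
    omega
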